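/- Let X be a Banach space. If the dual space X* equipped with the weak-star topology is dense-separable (every weak-star dense subset of X* is weak-star separable), then X has the Countable Separation Property: every subset F ⊆ X* that separates the points of X contains a countable subset F₀ that separates the points of X. -/

import Mathlib

open Cardinal Set TopologicalSpace

universe u

/-- The density of a topological space: least cardinality of a dense subset. -/
noncomputable def densityCard (X : Type u) [TopologicalSpace X] : Cardinal.{u} :=
  sInf {c | ∃ D : Set X, Dense D ∧ #D = c}

/-- δ(X): the supremum of the densities of dense subspaces of `X`. -/
noncomputable def deltaCard (X : Type u) [TopologicalSpace X] : Cardinal.{u} :=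
  ⨆ D : {D : Set X // Dense D}, densityCard ↥(D.1)

/-- A π-base: a family of nonempty open sets such that every nonempty open set
contains a member of the family. -/
def IsPiBase {X : Type u} [TopologicalSpace X] (B : Set (Set X)) : Prop :=
  (∀ U ∈ B, IsOpen U ∧ U.Nonempty) ∧
  ∀ U : Set X, IsOpen U → U.Nonempty → ∃ V ∈ B, V ⊆ U

/-- The π-weight: least cardinality of a π-base. -/
noncomputable def piWeight (X : Type u) [TopologicalSpace X] : Cardinal.{u} :=
  sInf {c | ∃ B : Set (Set X), IsPiBase B ∧ #B = c}

/-- The weight: least cardinality of a base of the topology. -/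
noncomputable def weightCard (X : Type u) [TopologicalSpace X] : Cardinal.{u} :=
  sInf {c | ∃ B : Set (Set X), IsTopologicalBasis B ∧ #B = c}

/-- The set of points played by Player II before stage `β`. -/
def PlayedSet {X : Type u} (x : Ordinal.{u} → X) (β : Ordinal.{u}) : Set X :=
  {p | ∃ α < β, x α = p}

/-- Player I has a winning strategy in the open-point game `G_{X,θ}`:
there is a strategy `U` assigning to each history of points played by Player II a
nonempty open set (at positions where the played points are not yet dense), depending
only on the initial segment of the history, such that in every run in which Player II
plays legally, the set of played points becomes dense at some stage `β < θ`. -/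
def PlayerIWins (X : Type u) [TopologicalSpace X] (θ : Ordinal.{u}) : Prop :=
  ∃ U : (Ordinal.{u} → X) → Ordinal.{u} → Set X,
    (∀ x β, ¬ Dense (PlayedSet x β) → IsOpen (U x β) ∧ (U x β).Nonempty) ∧
    (∀ x y β, (∀ α < β, x α = y α) → U x β = U y β) ∧
    ∀ x : Ordinal.{u} → X, (∀ β < θ, ¬ Dense (PlayedSet x β) → x β ∈ U x β) →
      ∃ β < θ, Dense (PlayedSet x β)

/-- gd(X): the least infinite cardinal κ such that Player I has a winning strategy
in the open-point game `G_{X,κ⁺}`. -/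
noncomputable def gd (X : Type u) [TopologicalSpace X] : Cardinal.{u} :=
  sInf {κ | ℵ₀ ≤ κ ∧ PlayerIWins X (Order.succ κ).ord}

section AuxStmt12

open RealInnerProductSpace

variable {X : Type u} [NormedAddCommGroup X] [NormedSpace ℝ X]

/-- Evaluation linear map on the finite set `I`. -/
noncomputable def evalMap (I : Finset X) :
    WeakDual ℝ X →ₗ[ℝ] EuclideanSpace ℝ I where
  toFun f := WithLp.toLp 2 (fun i => f i.1)
  map_add' f g := rfl
  map_smul' c f := rfl

lemma interp (F : Set (WeakDual ℝ X)) (hF : ∀ x : X, x ≠ 0 → ∃ f ∈ F, f x ≠ 0)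
    (g : WeakDual ℝ X) (I : Finset X) :
    ∃ h ∈ Submodule.span ℝ F, ∀ x ∈ I, h x = g x := by
  classical
  set T := evalMap (X := X) I with hT
  set K : Submodule ℝ (EuclideanSpace ℝ I) := (Submodule.span ℝ F).map T with hK
  haveI : FiniteDimensional ℝ K := FiniteDimensional.finiteDimensional_submodule K
  haveI : CompleteSpace K := FiniteDimensional.complete ℝ K
  haveI : Submodule.HasOrthogonalProjection K := Submodule.HasOrthogonalProjection.ofCompleteSpace K
  have hTg : T g ∈ K := by
    by_contra hv
    set v : EuclideanSpace ℝ I := T g with hv'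
    set w : EuclideanSpace ℝ I := v - (Submodule.orthogonalProjection K v : EuclideanSpace ℝ I) with hw
    have hwK : w ∈ Kᗮ := Submodule.sub_starProjection_mem_orthogonal (K := K) v
    -- key identity : every functional applied to x₀ is the inner product
    set x₀ : X := ∑ i : I, w i • (i : X) with hx₀
    have key : ∀ f : WeakDual ℝ X, f x₀ = ⟪w, T f⟫ := by
      intro f
      rw [hx₀, map_sum]
      rw [PiLp.inner_apply]
      refine Finset.sum_congr rfl fun i _ => ?_
      have hTfi : (T f) i = f i.1 := rfl
      rw [hTfi, map_smul, smul_eq_mul, RCLike.inner_apply, conj_trivial, mul_comm]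
    have hx0 : x₀ = 0 := by
      by_contra hne
      obtain ⟨f, hfF, hfx⟩ := hF x₀ hne
      apply hfx
      rw [key f]
      exact (Submodule.mem_orthogonal' K w).mp hwK _
        (Submodule.mem_map_of_mem (Submodule.subset_span hfF))
    have hgv : (0 : ℝ) = ⟪w, v⟫ := by
      have := key g
      rw [hx0, map_zero] at this
      exact this
    have hvw : v = w + (Submodule.orthogonalProjection K v : EuclideanSpace ℝ I) := by
      rw [hw]; abel
    rw [hvw, inner_add_right] at hgv
    have h2 : ⟪w, ((Submodule.orthogonalProjection K v : EuclideanSpace ℝ I))⟫ = 0 :=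
      (Submodule.mem_orthogonal' K w).mp hwK _ (Submodule.orthogonalProjection K v).2
    rw [h2, add_zero] at hgv
    have hw0 : w = 0 := inner_self_eq_zero.mp hgv.symm
    apply hv
    have : v = (Submodule.orthogonalProjection K v : EuclideanSpace ℝ I) := by
      have := hw ▸ hw0
      rwa [sub_eq_zero] at this
    rw [this]
    exact (Submodule.orthogonalProjection K v).2
  obtain ⟨h, hh, hTh⟩ := hTg
  exact ⟨h, hh, fun x hx => congrFun (congrArg WithLp.ofLp hTh) ⟨x, hx⟩⟩

/-- Evaluation at a point, as a linear map on the weak-star dual. -/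
noncomputable def evalAt (x : X) : WeakDual ℝ X →ₗ[ℝ] ℝ where
  toFun f := f x
  map_add' f g := rfl
  map_smul' c f := rfl

lemma dense_span (F : Set (WeakDual ℝ X)) (hF : ∀ x : X, x ≠ 0 → ∃ f ∈ F, f x ≠ 0) :
    Dense ((Submodule.span ℝ F : Submodule ℝ (WeakDual ℝ X)) : Set (WeakDual ℝ X)) := by
  have hinj : Function.Injective (topDualPairing ℝ X) := ContinuousLinearMap.coe_injective
  have he : Topology.IsEmbedding (fun (f : WeakDual ℝ X) y => topDualPairing ℝ X f y) :=
    WeakBilin.isEmbedding (B := topDualPairing ℝ X) hinj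
  set ι : WeakDual ℝ X → (X → ℝ) := fun f y => topDualPairing ℝ X f y with hι
  intro g
  rw [he.toIsInducing.closure_eq_preimage_closure_image, Set.mem_preimage]
  rw [mem_closure_iff]
  intro O hO hgO
  obtain ⟨I, u, hu, hsub⟩ := (isOpen_pi_iff.mp hO) _ hgO
  obtain ⟨h, hh, hagree⟩ := interp F hF g I
  refine ⟨ι h, hsub fun a ha => ?_, Set.mem_image_of_mem ι hh⟩
  have : ι h a = ι g a := hagree a ha
  rw [this]
  exact (hu a ha).2

end AuxStmt12

/-- If the dual of a Banach space `X`, with the weak-star topology, is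
dense-separable, then `X` has the Countable Separation Property: every point-separating
family `F ⊆ X*` contains a countable point-separating subfamily. -/
theorem stmt12 (X : Type u) [NormedAddCommGroup X] [NormedSpace ℝ X] [CompleteSpace X]
    (hds : ∀ A : Set (WeakDual ℝ X), Dense A → SeparableSpace ↥A)
    (F : Set (WeakDual ℝ X)) (hF : ∀ x : X, x ≠ 0 → ∃ f ∈ F, f x ≠ 0) :
    ∃ F₀ ⊆ F, F₀.Countable ∧ ∀ x : X, x ≠ 0 → ∃ f ∈ F₀, f x ≠ 0 := by
  classical
  have hdense := dense_span F hF
  haveI := hds _ hdense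
  obtain ⟨t, htc, htd⟩ := TopologicalSpace.exists_countable_dense
    (((Submodule.span ℝ F : Submodule ℝ (WeakDual ℝ X)) : Set (WeakDual ℝ X)))
  set C : Set (WeakDual ℝ X) := Subtype.val '' t with hCdef
  have hCd : Dense C := hdense.denseRange_val.dense_image continuous_subtype_val htd
  have hCc : C.Countable := htc.image _
  have hCspan : ∀ c ∈ C, c ∈ Submodule.span ℝ F := by
    rintro c ⟨⟨c', hc'⟩, -, rfl⟩; exact hc'
  choose! σ hσ1 hσ2 using fun c (hc : c ∈ C) =>
    Submodule.mem_span_finite_of_mem_span (hCspan c hc)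
  refine ⟨⋃ c ∈ C, (σ c : Set (WeakDual ℝ X)), Set.iUnion₂_subset hσ1, ?_, ?_⟩
  · exact hCc.biUnion fun c _ => (σ c).countable_toSet
  · intro x hx
    by_contra hcon
    push_neg at hcon
    have hZc : IsClosed {f : WeakDual ℝ X | f x = 0} :=
      isClosed_eq (WeakDual.eval_continuous x) continuous_const
    have hCZ : C ⊆ {f : WeakDual ℝ X | f x = 0} := by
      intro c hc
      have hle : Submodule.span ℝ ((σ c : Set (WeakDual ℝ X))) ≤ LinearMap.ker (evalAt x) := by
        rw [Submodule.span_le]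
        intro f hf
        have : f ∈ ⋃ c ∈ C, (σ c : Set (WeakDual ℝ X)) :=
          Set.mem_biUnion hc hf
        exact hcon f this
      exact hle (hσ2 c hc)
    have hZuniv : {f : WeakDual ℝ X | f x = 0} = Set.univ := by
      have := dense_iff_closure_eq.mp (hCd.mono hCZ)
      rwa [hZc.closure_eq] at this
    obtain ⟨g₀, -, hg₀⟩ := exists_dual_vector ℝ x (norm_ne_zero_iff.mpr hx)
    have hg0 : (StrongDual.toWeakDual g₀) x = 0 := by
      have : (StrongDual.toWeakDual g₀) ∈ {f : WeakDual ℝ X | f x = 0} := by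
        rw [hZuniv]; trivial
      exact this
    rw [show (StrongDual.toWeakDual g₀) x = g₀ x from rfl, hg₀] at hg0
    exact (norm_ne_zero_iff.mpr hx) (by exact_mod_cast hg0)
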